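/- Let A be an associative ℂ-algebra containing elements E_0, E_1, …, E_{n-1} satisfying the type D Temperley–Lieb relations. Then for all integers i, j with i > j+1 > 1 (so j ≥ 1 and 3 ≤ i ≤ n-1), one has E_{i,0}E^{1,j}E_i = E_{i-2,0}E^{1,j}E_i. -/
import Mathlib


/-- `descProd E i j = E i * E (i-1) * ⋯ * E j` (empty product `1` when `j = i + 1`). -/
def descProd {A : Type*} [Monoid A] (E : ℕ → A) (i j : ℕ) : A :=
  ((List.range (i + 1 - j)).map (fun k => E (i - k))).prod

/-- `ascProd E i j = E i * E (i+1) * ⋯ * E j` (empty product `1` when `j = i - 1`). -/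
def ascProd {A : Type*} [Monoid A] (E : ℕ → A) (i j : ℕ) : A :=
  ((List.range (j + 1 - i)).map (fun k => E (i + k))).prod

/-- Type D convention: `E_{i,0} = E i * E (i-1) * ⋯ * E 3 * E 2 * E 0` for `i ≥ 2`,
and `E_{1,0} = E 0`. -/
def descProdD {A : Type*} [Monoid A] (E : ℕ → A) (i : ℕ) : A :=
  descProd E i 2 * E 0

private lemma descProd_cons {A : Type*} [Monoid A] (E : ℕ → A) (i j : ℕ) (h : j ≤ i) (hi : 1 ≤ i) :
    descProd E i j = E i * descProd E (i - 1) j := by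
  unfold descProd
  have h1 : i + 1 - j = (i - j) + 1 := by omega
  have h2 : i - 1 + 1 - j = i - j := by omega
  rw [h1, h2, List.range_succ_eq_map, List.map_cons, List.prod_cons, List.map_map]
  have hf : ((fun k => E (i - k)) ∘ (· + 1)) = fun k => E (i - 1 - k) := by
    funext k
    simp only [Function.comp_apply]
    congr 1
    omega
  rw [hf]
  simp

private lemma commute_descProd {A : Type*} [Monoid A] (E : ℕ → A) (x : A) (i j : ℕ)
    (h : ∀ m, j ≤ m → m ≤ i → Commute x (E m)) : Commute x (descProd E i j) := by
  apply Commute.list_prod_right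
  intro y hy
  simp only [List.mem_map, List.mem_range] at hy
  obtain ⟨k, hk, rfl⟩ := hy
  exact h _ (by omega) (by omega)

private lemma commute_ascProd {A : Type*} [Monoid A] (E : ℕ → A) (x : A) (i j : ℕ)
    (h : ∀ m, i ≤ m → m ≤ j → Commute x (E m)) : Commute x (ascProd E i j) := by
  apply Commute.list_prod_right
  intro y hy
  simp only [List.mem_map, List.mem_range] at hy
  obtain ⟨k, hk, rfl⟩ := hy
  exact h _ (by omega) (by omega)

/-- Type D Temperley–Lieb relation: `E_{i,0} E^{1,j} E_i = E_{i-2,0} E^{1,j} E_i`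
for `i > j + 1 > 1` (with `i ≤ n - 1`). -/
theorem typeD_lemma_d (n : ℕ) (hn : 4 ≤ n) (δ : ℂ) (A : Type*) [Ring A] [Algebra ℂ A]
    (E : ℕ → A)
    (hsq : ∀ i, i ≤ n - 1 → E i * E i = δ • E i)
    (hcomm : ∀ i j, 1 ≤ j → j + 1 < i → i ≤ n - 1 → E i * E j = E j * E i)
    (hcomm0 : ∀ i, i ≤ n - 1 → i ≠ 2 → E i * E 0 = E 0 * E i)
    (hup : ∀ i, 1 ≤ i → i + 1 ≤ n - 1 → E i * E (i + 1) * E i = E i)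
    (hdown : ∀ i, 2 ≤ i → i ≤ n - 1 → E i * E (i - 1) * E i = E i)
    (h020 : E 0 * E 2 * E 0 = E 0)
    (h202 : E 2 * E 0 * E 2 = E 2) :
    ∀ i j, 1 ≤ j → j + 1 < i → i ≤ n - 1 →
      descProdD E i * ascProd E 1 j * E i = descProdD E (i - 2) * ascProd E 1 j * E i := by
  intro i j hj hji hin
  have hi3 : 3 ≤ i := by omega
  -- split the descending product
  have hsplit : descProd E i 2 = E i * (E (i - 1) * descProd E (i - 2) 2) := by
    rw [descProd_cons E i 2 (by omega) (by omega),
      descProd_cons E (i - 1) 2 (by omega) (by omega), show i - 1 - 1 = i - 2 from by omega]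
  -- E i commutes with the tail X
  have hC1 : Commute (E i) (descProd E (i - 2) 2) := by
    apply commute_descProd
    intro m hm2 hmi
    exact hcomm i m (by omega) (by omega) hin
  have hC0 : Commute (E i) (E 0) := hcomm0 i hin (by omega)
  have hC2 : Commute (E i) (ascProd E 1 j) := by
    apply commute_ascProd
    intro m hm1 hmj
    exact hcomm i m hm1 (by omega) hin
  set X : A := descProd E (i - 2) 2 * E 0 * ascProd E 1 j with hX
  have hCX : Commute (E i) X := (hC1.mul_right hC0).mul_right hC2
  have hEEE : E i * E (i - 1) * E i = E i := hdown i (by omega) hin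
  calc descProdD E i * ascProd E 1 j * E i
      = (E i * E (i - 1)) * (X * E i) := by
        rw [descProdD, hsplit, hX]; simp only [mul_assoc]
    _ = (E i * E (i - 1)) * (E i * X) := by rw [← hCX.eq]
    _ = (E i * E (i - 1) * E i) * X := by simp only [mul_assoc]
    _ = E i * X := by rw [hEEE]
    _ = X * E i := hCX.eq
    _ = descProdD E (i - 2) * ascProd E 1 j * E i := by
        rw [descProdD, hX]
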